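/- Monotone convergence theorem for order integrals: Let (X, Ω, μ, E) be a measure space with Ω a σ-algebra. If (f_n) is a sequence of measurable functions X → [0,∞] and f : X → [0,∞] is measurable with f_n(x) ↑ f(x) for μ-almost all x ∈ X, then ∫ᵒ f_n dμ ↑ ∫ᵒ f dμ in E̅, i.e., ⋁_n ∫ᵒ f_n dμ = ∫ᵒ f dμ. -/

import Mathlib

open MeasureTheory

/-- The action of `ℝ⁺` (as `ℝ≥0`) on `E̅⁺ ⊆ WithTop E`: `r • ∞ = ∞` for
`r > 0` and `0 • ∞ = 0`. -/
noncomputable def eSMul {E : Type*} [AddCommGroup E] [Module ℝ E]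
    (r : NNReal) (x : WithTop E) : WithTop E :=
  if r = 0 then 0 else x.map fun e => (r : ℝ) • e

/-- The order integral of a nonnegative elementary (finite-valued simple
measurable) function with respect to a set map `μ : Ω → E̅⁺`. -/
noncomputable def elemOInt {X : Type*} [MeasurableSpace X]
    {E : Type*} [AddCommGroup E] [Module ℝ E]
    (μ : Set X → WithTop E) (φ : SimpleFunc X NNReal) : WithTop E :=
  ∑ r ∈ φ.range, eSMul r (μ (⇑φ ⁻¹' {r}))

/-- `μ : Ω → E̅⁺` is an order-σ-additive `E̅⁺`-valued measure on the σ-algebra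
of measurable sets. -/
def IsOMeasure {X : Type*} [MeasurableSpace X]
    {E : Type*} [AddCommGroup E] [PartialOrder E] (μ : Set X → WithTop E) : Prop :=
  μ ∅ = 0 ∧ (∀ s : Set X, MeasurableSet s → 0 ≤ μ s) ∧
  ∀ Δ : ℕ → Set X, (∀ n, MeasurableSet (Δ n)) →
    (∀ m n, m ≠ n → Disjoint (Δ m) (Δ n)) →
    IsLUB (Set.range fun N => ∑ n ∈ Finset.range N, μ (Δ n)) (μ (⋃ n, Δ n))


/-- `I ∈ E̅⁺` is the order integral of the measurable function `f : X → [0,∞]`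
with respect to `μ`: it is the supremum of the order integrals of some (hence,
by well-definedness, any) sequence of nonnegative elementary functions
increasing pointwise to `f`. -/
def HasOInt {X : Type*} [MeasurableSpace X]
    {E : Type*} [AddCommGroup E] [PartialOrder E] [Module ℝ E]
    (μ : Set X → WithTop E) (f : X → ENNReal) (I : WithTop E) : Prop :=
  ∃ φ : ℕ → SimpleFunc X NNReal,
    (∀ x : X, Monotone fun n => φ n x) ∧
    (∀ x : X, (⨆ n, ((φ n x : ENNReal))) = f x) ∧
    IsLUB (Set.range fun n => elemOInt μ (φ n)) I

section eSMul
variable {E : Type*} [AddCommGroup E] [PartialOrder E] [IsOrderedAddMonoid E] [Module ℝ E] [PosSMulStrictMono ℝ E]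

lemma eSMul_zero (r : NNReal) : eSMul r (0 : WithTop E) = 0 := by
  unfold eSMul
  split
  · rfl
  · show (WithTop.map _ ((0:E) : WithTop E)) = _
    rw [WithTop.map_coe]
    simp

lemma eSMul_coe (r : NNReal) (hr : r ≠ 0) (e : E) :
    eSMul r (e : WithTop E) = ((r : ℝ) • e : E) := by
  unfold eSMul; rw [if_neg hr, WithTop.map_coe]

lemma eSMul_top (r : NNReal) (hr : r ≠ 0) : eSMul r (⊤ : WithTop E) = ⊤ := by
  unfold eSMul; rw [if_neg hr]; rfl

lemma eSMul_add (r : NNReal) (x y : WithTop E) :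
    eSMul r (x + y) = eSMul r x + eSMul r y := by
  rcases eq_or_ne r 0 with h | h
  · simp [eSMul, h]
  · induction x with
    | top => simp only [WithTop.top_add, eSMul_top r h]
    | coe a =>
      induction y with
      | top => simp only [WithTop.add_top, eSMul_top r h]
      | coe b => rw [← WithTop.coe_add, eSMul_coe r h, eSMul_coe r h, eSMul_coe r h,
          smul_add, WithTop.coe_add]

lemma eSMul_nonneg (r : NNReal) {x : WithTop E} (hx : 0 ≤ x) : 0 ≤ eSMul r x := by
  rcases eq_or_ne r 0 with h | h
  · simp [eSMul, h]
  · induction x with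
    | top => rw [eSMul_top r h]; exact le_top
    | coe a =>
      rw [eSMul_coe r h, ← WithTop.coe_zero, WithTop.coe_le_coe]
      rw [← WithTop.coe_zero, WithTop.coe_le_coe] at hx
      exact smul_nonneg r.2 hx

lemma eSMul_mono_left {r s : NNReal} (hrs : r ≤ s) {x : WithTop E} (hx : 0 ≤ x) :
    eSMul r x ≤ eSMul s x := by
  rcases eq_or_ne r 0 with h | h
  · rw [h]; simpa [eSMul] using eSMul_nonneg s hx
  · have hs : s ≠ 0 := fun hs => h (le_antisymm (hs ▸ hrs) r.2)
    induction x with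
    | top => rw [eSMul_top r h, eSMul_top s hs]
    | coe a =>
      rw [eSMul_coe r h, eSMul_coe s hs, WithTop.coe_le_coe]
      rw [← WithTop.coe_zero, WithTop.coe_le_coe] at hx
      exact smul_le_smul_of_nonneg_right (by exact_mod_cast hrs) hx

lemma eSMul_mul (c r : NNReal) (x : WithTop E) :
    eSMul (c * r) x = eSMul c (eSMul r x) := by
  rcases eq_or_ne c 0 with hc | hc
  · simp [eSMul, hc]
  · rcases eq_or_ne r 0 with hr | hr
    · simp [eSMul, hr, hc, mul_comm]
    · have hcr : c * r ≠ 0 := mul_ne_zero hc hr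
      induction x with
      | top => rw [eSMul_top r hr, eSMul_top _ hcr, eSMul_top c hc]
      | coe a => rw [eSMul_coe r hr, eSMul_coe _ hcr, eSMul_coe c hc, smul_smul,
          NNReal.coe_mul]

lemma eSMul_mono (r : NNReal) {x y : WithTop E} (h : x ≤ y) : eSMul r x ≤ eSMul r y := by
  rcases eq_or_ne r 0 with hr | hr
  · simp [eSMul, hr]
  · induction y with
    | top => rw [eSMul_top r hr]; exact le_top
    | coe b =>
      induction x with
      | top => exact absurd h (by simp)
      | coe a =>
        rw [eSMul_coe r hr, eSMul_coe r hr, WithTop.coe_le_coe]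
        exact smul_le_smul_of_nonneg_left (WithTop.coe_le_coe.mp h) r.2

/-- eSMul by a nonzero scalar preserves LUBs. -/
lemma eSMul_isLUB (r : NNReal) (hr : r ≠ 0) {S : Set (WithTop E)} {x : WithTop E}
    (h : IsLUB S x) : IsLUB (eSMul r '' S) (eSMul r x) := by
  have hr' : (0:ℝ) < r := lt_of_le_of_ne r.2 (by exact_mod_cast (Ne.symm hr))
  let e : WithTop E ≃o WithTop E := (OrderIso.smulRight hr' : E ≃o E).withTopCongr
  have key : ∀ z : WithTop E, e z = eSMul r z := by
    intro z
    induction z with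
    | top =>
      rw [eSMul_top r hr]
      simp [e, OrderIso.withTopCongr, Equiv.optionCongr]
    | coe a =>
      rw [eSMul_coe r hr]
      show ((OrderIso.smulRight hr' : E ≃o E).withTopCongr : WithTop E → WithTop E) _ = _
      simp only [OrderIso.withTopCongr, Equiv.optionCongr, RelIso.coe_fn_mk, Equiv.coe_fn_mk]
      rfl
  have := e.isLUB_image (s := S) (x := e x)
  rw [e.symm_apply_apply] at this
  have h2 : IsLUB (⇑e '' S) (e x) := this.mpr h
  rw [key x] at h2
  rwa [Set.image_congr (fun w _ => key w)] at h2

end eSMul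


section Meas
set_option linter.unusedSectionVars false
variable {X : Type*} [MeasurableSpace X] {E : Type*} [AddCommGroup E] [PartialOrder E] [IsOrderedAddMonoid E]
  {μ : Set X → WithTop E} (hμ : IsOMeasure μ)
include hμ

lemma om_add {s t : Set X} (hs : MeasurableSet s) (ht : MeasurableSet t)
    (hst : Disjoint s t) : μ (s ∪ t) = μ s + μ t := by
  obtain ⟨h0, hpos, hσ⟩ := hμ
  set Δ : ℕ → Set X := fun n => if n = 0 then s else if n = 1 then t else ∅ with hΔ
  have hmeas : ∀ n, MeasurableSet (Δ n) := by
    intro n; simp only [hΔ]; split <;> [exact hs; skip]; split <;> [exact ht; exact MeasurableSet.empty]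
  have hdisj : ∀ m n, m ≠ n → Disjoint (Δ m) (Δ n) := by
    intro m n hmn
    simp only [hΔ]
    split_ifs with h1 h2 h3 h4 h5 h6 h7
    all_goals first
      | exact hst
      | exact hst.symm
      | exact Set.disjoint_empty _
      | exact Set.empty_disjoint _
      | omega
  have hUnion : (⋃ n, Δ n) = s ∪ t := by
    apply Set.Subset.antisymm
    · refine Set.iUnion_subset fun n => ?_
      simp only [hΔ]
      split_ifs
      · exact Set.subset_union_left
      · exact Set.subset_union_right
      · exact Set.empty_subset _
    · intro x hx
      rcases hx with hx | hx
      · exact Set.mem_iUnion.mpr ⟨0, by simp [hΔ, hx]⟩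
      · exact Set.mem_iUnion.mpr ⟨1, by simp [hΔ, hx]⟩
  have hlub := hσ Δ hmeas hdisj
  rw [hUnion] at hlub
  have hsum2 : (∑ n ∈ Finset.range 2, μ (Δ n)) = μ s + μ t := by
    rw [Finset.sum_range_succ, Finset.sum_range_one]
    simp [hΔ]
  have hsum : ∀ N, 2 ≤ N → (∑ n ∈ Finset.range N, μ (Δ n)) = μ s + μ t := by
    intro N hN
    rw [← Finset.sum_subset (Finset.range_subset_range.mpr hN)]
    · exact hsum2
    · intro n _ hn
      simp only [Finset.mem_range] at hn
      have h0' : n ≠ 0 := by omega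
      have h1' : n ≠ 1 := by omega
      simp [hΔ, h0', h1', h0]
  refine (hlub.unique ?_)
  constructor
  · rintro _ ⟨N, rfl⟩
    rcases le_or_gt 2 N with hN | hN
    · exact (hsum N hN).le
    · calc (∑ n ∈ Finset.range N, μ (Δ n)) ≤ ∑ n ∈ Finset.range 2, μ (Δ n) := by
            refine Finset.sum_le_sum_of_subset_of_nonneg (Finset.range_subset_range.mpr hN.le) ?_
            intro n _ _
            exact hpos _ (hmeas n)
          _ = μ s + μ t := hsum2
  · intro u hu
    exact le_trans hsum2.ge (hu ⟨2, rfl⟩)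

lemma om_empty : μ ∅ = 0 := hμ.1

lemma om_nonneg {s : Set X} (hs : MeasurableSet s) : 0 ≤ μ s := hμ.2.1 s hs

lemma om_mono {s t : Set X} (hs : MeasurableSet s) (ht : MeasurableSet t)
    (hsub : s ⊆ t) : μ s ≤ μ t := by
  have : t = s ∪ (t \ s) := by rw [Set.union_diff_cancel hsub]
  rw [this, om_add hμ hs (ht.diff hs) Set.disjoint_sdiff_right]
  exact le_add_of_nonneg_right (om_nonneg hμ (ht.diff hs))

lemma om_null {s N : Set X} (hs : MeasurableSet s) (hN : MeasurableSet N)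
    (h0 : μ N = 0) : μ (s \ N) = μ s := by
  have hd : s = (s \ N) ∪ (s ∩ N) := by
    ext x; by_cases hx : x ∈ N <;> simp [hx] <;> tauto
  have hint : μ (s ∩ N) = 0 := by
    refine le_antisymm ?_ (om_nonneg hμ (hs.inter hN))
    calc μ (s ∩ N) ≤ μ N := om_mono hμ (hs.inter hN) hN Set.inter_subset_right
      _ = 0 := h0
  conv_rhs => rw [hd]
  rw [om_add hμ (hs.diff hN) (hs.inter hN)
    (Set.disjoint_sdiff_left.mono_right Set.inter_subset_right), hint, add_zero]

/-- Continuity from below. -/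
lemma om_contBelow {s : ℕ → Set X} (hs : ∀ n, MeasurableSet (s n)) (hmono : Monotone s) :
    IsLUB (Set.range fun n => μ (s n)) (μ (⋃ n, s n)) := by
  set Δ : ℕ → Set X := fun n => if n = 0 then s 0 else s n \ s (n - 1) with hΔ
  have hmeas : ∀ n, MeasurableSet (Δ n) := by
    intro n; simp only [hΔ]; split
    · exact hs 0
    · exact (hs n).diff (hs (n-1))
  have hΔsub : ∀ n, Δ n ⊆ s n := by
    intro n; simp only [hΔ]; split
    · next h => subst h; exact subset_rfl
    · exact Set.diff_subset
  have hΔdisj' : ∀ m n, m < n → Disjoint (Δ m) (Δ n) := by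
    intro m n hmn
    have h1 : Δ m ⊆ s (n-1) := (hΔsub m).trans (hmono (by omega))
    have h2 : Disjoint (s (n-1)) (Δ n) := by
      simp only [hΔ]
      rw [if_neg (by omega : ¬ n = 0)]
      exact Set.disjoint_sdiff_right
    exact (h2.mono_left h1)
  have hΔdisj : ∀ m n, m ≠ n → Disjoint (Δ m) (Δ n) := by
    intro m n hmn
    rcases lt_or_gt_of_ne hmn with h | h
    · exact hΔdisj' m n h
    · exact (hΔdisj' n m h).symm
  have hUnion : (⋃ n, Δ n) = ⋃ n, s n := by
    apply Set.Subset.antisymm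
    · exact Set.iUnion_mono hΔsub
    · refine Set.iUnion_subset fun n x hx => ?_
      -- least n with x ∈ s n
      have hex : ∃ m, x ∈ s m := ⟨n, hx⟩
      classical
      let m := Nat.find hex
      have hm : x ∈ s m := Nat.find_spec hex
      rcases Nat.eq_zero_or_pos m with h0' | h0'
      · exact Set.mem_iUnion.mpr ⟨0, by simp [hΔ, ← h0', hm]⟩
      · have hnot : x ∉ s (m - 1) := Nat.find_min hex (by omega)
        refine Set.mem_iUnion.mpr ⟨m, ?_⟩
        simp only [hΔ, if_neg (by omega : ¬ m = 0)]
        exact ⟨hm, hnot⟩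
  have hsum : ∀ N, (∑ n ∈ Finset.range (N+1), μ (Δ n)) = μ (s N) := by
    intro N
    induction N with
    | zero => simp [hΔ]
    | succ N ih =>
      rw [Finset.sum_range_succ, ih]
      have : s (N+1) = s N ∪ Δ (N+1) := by
        simp only [hΔ, if_neg (Nat.succ_ne_zero N), Nat.add_sub_cancel]
        rw [Set.union_diff_cancel (hmono (Nat.le_succ N))]
      rw [← om_add hμ (hs N) (hmeas (N+1))
        (by simp only [hΔ, if_neg (Nat.succ_ne_zero N), Nat.add_sub_cancel]
            exact Set.disjoint_sdiff_right), ← this]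
  have hlub := hμ.2.2 Δ hmeas hΔdisj
  rw [hUnion] at hlub
  constructor
  · rintro _ ⟨n, rfl⟩
    show μ (s n) ≤ _
    rw [← hsum n]
    exact hlub.1 ⟨n+1, rfl⟩
  · intro u hu
    refine hlub.2 ?_
    rintro _ ⟨N, rfl⟩
    rcases Nat.eq_zero_or_pos N with h0' | h0'
    · subst h0'
      show (∑ n ∈ Finset.range 0, μ (Δ n)) ≤ u
      simp only [Finset.range_zero, Finset.sum_empty]
      exact le_trans (om_nonneg hμ (hs 0)) (hu ⟨0, rfl⟩)
    · obtain ⟨M, rfl⟩ : ∃ M, N = M + 1 := ⟨N - 1, by omega⟩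
      show (∑ n ∈ Finset.range (M+1), μ (Δ n)) ≤ u
      rw [hsum M]
      exact hu ⟨M, rfl⟩

end Meas


section Elem
set_option linter.unusedSectionVars false
variable {X : Type*} [MeasurableSpace X] {E : Type*} [AddCommGroup E] [PartialOrder E] [IsOrderedAddMonoid E]
  [Module ℝ E] [PosSMulStrictMono ℝ E]
  {μ : Set X → WithTop E} (hμ : IsOMeasure μ)

lemma preimage_empty_of_not_mem_range (φ : SimpleFunc X NNReal) {r : NNReal}
    (hr : r ∉ φ.range) : ⇑φ ⁻¹' {r} = ∅ := by
  ext x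
  simp only [Set.mem_preimage, Set.mem_singleton_iff, Set.mem_empty_iff_false, iff_false]
  intro h
  exact hr (SimpleFunc.mem_range.mpr ⟨x, h⟩)

lemma eSMul_sum {ι : Type*} (r : NNReal) (t : Finset ι) (f : ι → WithTop E) :
    eSMul r (∑ i ∈ t, f i) = ∑ i ∈ t, eSMul r (f i) := by
  classical
  induction t using Finset.induction with
  | empty => simp [eSMul_zero]
  | insert _ _ h ih => rw [Finset.sum_insert h, Finset.sum_insert h, eSMul_add, ih]

include hμ

lemma elemOInt_eq_sum_of_subset (φ : SimpleFunc X NNReal) {T : Finset NNReal}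
    (hT : φ.range ⊆ T) :
    elemOInt μ φ = ∑ r ∈ T, eSMul r (μ (⇑φ ⁻¹' {r})) := by
  refine Finset.sum_subset hT fun r _ hr => ?_
  rw [preimage_empty_of_not_mem_range φ hr, om_empty hμ, eSMul_zero]

lemma elemOInt_nonneg (φ : SimpleFunc X NNReal) : 0 ≤ elemOInt μ φ :=
  Finset.sum_nonneg fun r _ => eSMul_nonneg r (om_nonneg hμ (φ.measurableSet_fiber r))

/-- Finite additivity of `μ` over the fibers of a simple function. -/
lemma om_partition (φ : SimpleFunc X NNReal) {B : Set X} (hB : MeasurableSet B) :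
    μ B = ∑ r ∈ φ.range, μ (B ∩ ⇑φ ⁻¹' {r}) := by
  classical
  -- induction over the range
  suffices h : ∀ (t : Finset NNReal), μ (B ∩ ⇑φ ⁻¹' ↑t) = ∑ r ∈ t, μ (B ∩ ⇑φ ⁻¹' {r}) by
    have h2 := h φ.range
    have h3 : B ∩ ⇑φ ⁻¹' ↑φ.range = B := by
      apply Set.inter_eq_self_of_subset_left
      intro x _
      simp only [Set.mem_preimage, Finset.coe_sort_coe, Finset.mem_coe]
      exact SimpleFunc.mem_range.mpr ⟨x, rfl⟩
    rwa [h3] at h2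
  intro t
  induction t using Finset.induction with
  | empty => simpa using om_empty hμ
  | @insert a t ha ih =>
    rw [Finset.sum_insert ha, ← ih]
    have hset : B ∩ ⇑φ ⁻¹' ↑(insert a t) = (B ∩ ⇑φ ⁻¹' {a}) ∪ (B ∩ ⇑φ ⁻¹' ↑t) := by
      rw [Finset.coe_insert, Set.insert_eq, Set.preimage_union, Set.inter_union_distrib_left]
    have hm1 : MeasurableSet (B ∩ ⇑φ ⁻¹' {a}) := hB.inter (φ.measurableSet_fiber a)
    have hm2 : MeasurableSet (B ∩ ⇑φ ⁻¹' ↑t) := hB.inter (φ.measurableSet_preimage _)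
    have hdisj : Disjoint (B ∩ ⇑φ ⁻¹' {a}) (B ∩ ⇑φ ⁻¹' ↑t) := by
      refine Set.disjoint_left.mpr fun x hx1 hx2 => ?_
      have h1 : φ x = a := hx1.2
      have h2 : φ x ∈ (t : Set NNReal) := hx2.2
      exact ha (by rwa [h1] at h2)
    rw [hset, om_add hμ hm1 hm2 hdisj]

/-- Monotonicity of the elementary order integral. -/
lemma elemOInt_mono {φ ψ : SimpleFunc X NNReal} (h : ∀ x, φ x ≤ ψ x) :
    elemOInt μ φ ≤ elemOInt μ ψ := by
  classical
  have hφ : elemOInt μ φ = ∑ r ∈ φ.range, ∑ s ∈ ψ.range, eSMul r (μ (⇑φ ⁻¹' {r} ∩ ⇑ψ ⁻¹' {s})) :=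
    calc elemOInt μ φ
        = ∑ r ∈ φ.range, eSMul r (∑ s ∈ ψ.range, μ (⇑φ ⁻¹' {r} ∩ ⇑ψ ⁻¹' {s})) :=
          Finset.sum_congr rfl fun r _ =>
            congrArg (eSMul r) (om_partition hμ ψ (φ.measurableSet_fiber r))
      _ = ∑ r ∈ φ.range, ∑ s ∈ ψ.range, eSMul r (μ (⇑φ ⁻¹' {r} ∩ ⇑ψ ⁻¹' {s})) :=
          Finset.sum_congr rfl fun r _ => eSMul_sum r _ _
  have hψ : elemOInt μ ψ = ∑ r ∈ φ.range, ∑ s ∈ ψ.range, eSMul s (μ (⇑φ ⁻¹' {r} ∩ ⇑ψ ⁻¹' {s})) :=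
    calc elemOInt μ ψ
        = ∑ s ∈ ψ.range, eSMul s (∑ r ∈ φ.range, μ (⇑ψ ⁻¹' {s} ∩ ⇑φ ⁻¹' {r})) :=
          Finset.sum_congr rfl fun s _ =>
            congrArg (eSMul s) (om_partition hμ φ (ψ.measurableSet_fiber s))
      _ = ∑ s ∈ ψ.range, ∑ r ∈ φ.range, eSMul s (μ (⇑φ ⁻¹' {r} ∩ ⇑ψ ⁻¹' {s})) := by
          refine Finset.sum_congr rfl fun s _ => ?_
          rw [eSMul_sum]
          exact Finset.sum_congr rfl fun r _ => by rw [Set.inter_comm]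
      _ = ∑ r ∈ φ.range, ∑ s ∈ ψ.range, eSMul s (μ (⇑φ ⁻¹' {r} ∩ ⇑ψ ⁻¹' {s})) := Finset.sum_comm
  rw [hφ, hψ]
  refine Finset.sum_le_sum fun r _ => Finset.sum_le_sum fun s _ => ?_
  rcases Set.eq_empty_or_nonempty (⇑φ ⁻¹' {r} ∩ ⇑ψ ⁻¹' {s}) with he | hne
  · rw [he, om_empty hμ, eSMul_zero, eSMul_zero]
  · obtain ⟨x, hx1, hx2⟩ := hne
    have hrs : r ≤ s := by
      have h1 : φ x = r := hx1
      have h2 : ψ x = s := hx2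
      rw [← h1, ← h2]; exact h x
    exact eSMul_mono_left hrs (om_nonneg hμ ((φ.measurableSet_fiber r).inter (ψ.measurableSet_fiber s)))

lemma restrict_preimage' (φ : SimpleFunc X NNReal) {A : Set X} (hA : MeasurableSet A)
    {r : NNReal} (hr : r ≠ 0) : ⇑(φ.restrict A) ⁻¹' {r} = ⇑φ ⁻¹' {r} ∩ A := by
  ext x
  simp only [Set.mem_preimage, Set.mem_singleton_iff, Set.mem_inter_iff]
  rw [SimpleFunc.restrict_apply φ hA]
  by_cases hx : x ∈ A
  · simp [Set.indicator_of_mem hx, hx]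
  · simp [Set.indicator_of_notMem hx, hx, Ne.symm hr]

lemma elemOInt_restrict (φ : SimpleFunc X NNReal) {A : Set X} (hA : MeasurableSet A) :
    elemOInt μ (φ.restrict A) = ∑ r ∈ φ.range, eSMul r (μ (⇑φ ⁻¹' {r} ∩ A)) := by
  classical
  set T := φ.range ∪ (φ.restrict A).range with hT
  rw [elemOInt_eq_sum_of_subset hμ _ (Finset.subset_union_right : (φ.restrict A).range ⊆ T)]
  rw [show (∑ r ∈ φ.range, eSMul r (μ (⇑φ ⁻¹' {r} ∩ A)))
      = ∑ r ∈ T, eSMul r (μ (⇑φ ⁻¹' {r} ∩ A)) from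
    Finset.sum_subset Finset.subset_union_left fun r _ hr => by
      rw [Set.eq_empty_of_subset_empty
        ((Set.inter_subset_left).trans (preimage_empty_of_not_mem_range φ hr).subset),
        om_empty hμ, eSMul_zero]]
  refine Finset.sum_congr rfl fun r _ => ?_
  rcases eq_or_ne r 0 with hr0 | hr0
  · subst hr0; simp [eSMul]
  · rw [restrict_preimage' hμ φ hA hr0]

lemma elemOInt_null (φ : SimpleFunc X NNReal) {N : Set X} (hN : MeasurableSet N)
    (h0 : μ N = 0) : elemOInt μ (φ.restrict Nᶜ) = elemOInt μ φ := by
  rw [elemOInt_restrict hμ φ hN.compl]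
  refine Finset.sum_congr rfl fun r _ => ?_
  rw [show ⇑φ ⁻¹' {r} ∩ Nᶜ = ⇑φ ⁻¹' {r} \ N from rfl,
    om_null hμ (φ.measurableSet_fiber r) hN h0]

end Elem

section LUBs
set_option linter.unusedSectionVars false
variable {E : Type*} [AddCommGroup E] [PartialOrder E] [IsOrderedAddMonoid E]

lemma isLUB_const_zero : IsLUB (Set.range fun _ : ℕ => (0 : WithTop E)) 0 := by
  constructor
  · rintro _ ⟨n, rfl⟩; exact le_rfl
  · intro u hu; exact hu ⟨0, rfl⟩

lemma isLUB_add_seq {a b : ℕ → WithTop E} (hamono : Monotone a) (hbmono : Monotone b)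
    {A B : WithTop E} (hA : IsLUB (Set.range a) A) (hB : IsLUB (Set.range b) B) :
    IsLUB (Set.range fun n => a n + b n) (A + B) := by
  constructor
  · rintro _ ⟨n, rfl⟩
    exact add_le_add (hA.1 ⟨n, rfl⟩) (hB.1 ⟨n, rfl⟩)
  · intro u hu
    have hcross : ∀ n m, a n + b m ≤ u := by
      intro n m
      have h1 : a n + b m ≤ a (max n m) + b (max n m) :=
        add_le_add (hamono (le_max_left n m)) (hbmono (le_max_right n m))
      exact le_trans h1 (hu ⟨max n m, rfl⟩)
    induction u with
    | top => exact le_top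
    | coe u' =>
      have hafin : ∀ n, ∃ an' : E, a n = ↑an' := by
        intro n
        cases han : a n with
        | top =>
          exfalso
          have := hcross n 0
          rw [han, WithTop.top_add] at this
          exact absurd this (by simp)
        | coe an' => exact ⟨an', rfl⟩
      have hbfin : ∀ m, ∃ bm' : E, b m = ↑bm' := by
        intro m
        cases hbm : b m with
        | top =>
          exfalso
          have := hcross 0 m
          rw [hbm, WithTop.add_top] at this
          exact absurd this (by simp)
        | coe bm' => exact ⟨bm', rfl⟩
      obtain ⟨b0', hb0⟩ := hbfin 0
      have hAub : ∀ m (bm' : E), b m = ↑bm' → A ≤ ↑(u' - bm') := by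
        intro m bm' hbm
        refine hA.2 ?_
        rintro _ ⟨n, rfl⟩
        obtain ⟨an', han⟩ := hafin n
        rw [han, WithTop.coe_le_coe]
        have := hcross n m
        rw [han, hbm, ← WithTop.coe_add, WithTop.coe_le_coe] at this
        exact le_sub_iff_add_le.mpr this
      obtain ⟨A', hAeq, _⟩ := WithTop.le_coe_iff.mp (hAub 0 b0' hb0)
      have hBub : B ≤ ↑(u' - A') := by
        refine hB.2 ?_
        rintro _ ⟨m, rfl⟩
        obtain ⟨bm', hbm⟩ := hbfin m
        have h2 := hAub m bm' hbm
        rw [hAeq, WithTop.coe_le_coe] at h2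
        rw [hbm, WithTop.coe_le_coe]
        have h3 : A' + bm' ≤ u' := by
          have := add_le_add_left h2 bm'
          simpa [sub_add_cancel] using this
        exact le_sub_iff_add_le.mpr (by rwa [add_comm] at h3)
      obtain ⟨B', hBeq, hB'⟩ := WithTop.le_coe_iff.mp hBub
      rw [hAeq, hBeq, ← WithTop.coe_add, WithTop.coe_le_coe]
      exact add_le_of_le_sub_left hB'

lemma isLUB_finset_sum {ι : Type*} (t : Finset ι) (F : ι → ℕ → WithTop E)
    (L : ι → WithTop E) (hmono : ∀ i ∈ t, Monotone (F i))
    (hlub : ∀ i ∈ t, IsLUB (Set.range (F i)) (L i)) :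
    IsLUB (Set.range fun n => ∑ i ∈ t, F i n) (∑ i ∈ t, L i) := by
  classical
  induction t using Finset.induction with
  | empty =>
    simp only [Finset.sum_empty]
    exact isLUB_const_zero
  | @insert a t ha ih =>
    have h1 := isLUB_add_seq (hmono a (Finset.mem_insert_self a t))
      (fun n m hnm => Finset.sum_le_sum fun i hi => hmono i (Finset.mem_insert_of_mem hi) hnm)
      (hlub a (Finset.mem_insert_self a t))
      (ih (fun i hi => hmono i (Finset.mem_insert_of_mem hi))
          (fun i hi => hlub i (Finset.mem_insert_of_mem hi)))
    simpa [Finset.sum_insert ha] using h1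

end LUBs

section Scale
set_option linter.unusedSectionVars false
variable {X : Type*} [MeasurableSpace X] {E : Type*} [AddCommGroup E] [PartialOrder E] [IsOrderedAddMonoid E]
  [Module ℝ E] [PosSMulStrictMono ℝ E]
  {μ : Set X → WithTop E} (hμ : IsOMeasure μ)
include hμ

lemma elemOInt_restrict_isLUB (φ : SimpleFunc X NNReal) {A : ℕ → Set X}
    (hA : ∀ n, MeasurableSet (A n)) (hAmono : Monotone A)
    (hAU : (⋃ n, A n) = Set.univ) :
    IsLUB (Set.range fun n => elemOInt μ (φ.restrict (A n))) (elemOInt μ φ) := by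
  have heq : (fun n => elemOInt μ (φ.restrict (A n)))
      = fun n => ∑ r ∈ φ.range, eSMul r (μ (⇑φ ⁻¹' {r} ∩ A n)) :=
    funext fun n => elemOInt_restrict hμ φ (hA n)
  rw [heq]
  show IsLUB _ (∑ r ∈ φ.range, eSMul r (μ (⇑φ ⁻¹' {r})))
  refine isLUB_finset_sum _ _ _ ?_ ?_
  · intro r _ n m hnm
    exact eSMul_mono r (om_mono hμ ((φ.measurableSet_fiber r).inter (hA n))
      ((φ.measurableSet_fiber r).inter (hA m))
      (Set.inter_subset_inter_right _ (hAmono hnm)))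
  · intro r _
    rcases eq_or_ne r 0 with hr0 | hr0
    · subst hr0
      simp only [eSMul, if_pos rfl]
      exact isLUB_const_zero
    · have hunion : (⋃ n, ⇑φ ⁻¹' {r} ∩ A n) = ⇑φ ⁻¹' {r} := by
        rw [← Set.inter_iUnion, hAU, Set.inter_univ]
      have hc := om_contBelow hμ (s := fun n => ⇑φ ⁻¹' {r} ∩ A n)
        (fun n => (φ.measurableSet_fiber r).inter (hA n))
        (fun n m hnm => Set.inter_subset_inter_right _ (hAmono hnm))
      rw [hunion] at hc
      have h2 := eSMul_isLUB r hr0 hc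
      rwa [← Set.range_comp] at h2

lemma elemOInt_map_mul (c : NNReal) (hc : c ≠ 0) (φ : SimpleFunc X NNReal) :
    elemOInt μ (φ.map (fun x => c * x)) = eSMul c (elemOInt μ φ) := by
  classical
  show _ = eSMul c (∑ r ∈ φ.range, eSMul r (μ (⇑φ ⁻¹' {r})))
  rw [eSMul_sum]
  show (∑ r ∈ (φ.map (fun x => c * x)).range, eSMul r (μ (⇑(φ.map fun x => c * x) ⁻¹' {r}))) = _
  rw [SimpleFunc.range_map]
  rw [Finset.sum_image (fun x _ y _ h => mul_left_cancel₀ hc h)]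
  refine Finset.sum_congr rfl fun r _ => ?_
  have hpre : ⇑(φ.map (fun x => c * x)) ⁻¹' {c * r} = ⇑φ ⁻¹' {r} := by
    rw [SimpleFunc.coe_map]
    ext x
    simp only [Set.mem_preimage, Function.comp_apply, Set.mem_singleton_iff]
    exact ⟨fun h => mul_left_cancel₀ hc h, fun h => by rw [h]⟩
  rw [hpre, eSMul_mul]

end Scale

section Arch
set_option linter.unusedSectionVars false
variable {E : Type*} [AddCommGroup E] [PartialOrder E] [IsOrderedAddMonoid E] [Module ℝ E] [PosSMulStrictMono ℝ E]

lemma arch_step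
    (hσ : ∀ a : ℕ → E, Monotone a → BddAbove (Set.range a) → ∃ s, IsLUB (Set.range a) s)
    {a K : WithTop E} (ha : 0 ≤ a)
    (h : ∀ c : NNReal, c ≠ 0 → c < 1 → eSMul c a ≤ K) : a ≤ K := by
  induction a with
  | top =>
    have h2 := h (1/2) (by norm_num) (by rw [← NNReal.coe_lt_coe]; norm_num)
    rw [eSMul_top _ (by norm_num)] at h2
    exact h2
  | coe a' =>
    induction K with
    | top => exact le_top
    | coe K' =>
      rw [WithTop.coe_le_coe]
      have ha' : (0 : E) ≤ a' := by
        rw [← WithTop.coe_zero, WithTop.coe_le_coe] at ha; exact ha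
      -- the sequence c n = (n+1)/(n+2)
      have key : ∀ n : ℕ, a' - K' ≤ (1 / (n + 2) : ℝ) • a' := by
        intro n
        set c : NNReal := ((n+1 : ℕ) : NNReal) / ((n+2 : ℕ) : NNReal) with hcdef
        have hc0 : c ≠ 0 := by
          rw [hcdef]
          refine div_ne_zero ?_ ?_ <;>
            exact Nat.cast_ne_zero.mpr (Nat.succ_ne_zero _)
        have hc1 : c < 1 := by
          rw [hcdef, div_lt_one (by positivity)]
          exact_mod_cast Nat.lt_succ_self (n+1)
        have h2 := h c hc0 hc1
        rw [eSMul_coe c hc0, WithTop.coe_le_coe] at h2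
        have hcr : (c : ℝ) = 1 - 1 / (n + 2) := by
          rw [hcdef]
          push_cast
          field_simp
          ring
        rw [hcr, sub_smul, one_smul] at h2
        exact sub_le_comm.mp h2
      -- archimedean argument via σ-completeness
      set u : ℕ → E := fun n => -((1 / (n + 2) : ℝ) • a') with hu
      have humono : Monotone u := by
        intro n m hnm
        rw [hu]
        simp only [neg_le_neg_iff]
        refine smul_le_smul_of_nonneg_right ?_ ha'
        rw [div_le_div_iff₀ (by positivity) (by positivity)]
        have : (n : ℝ) ≤ m := by exact_mod_cast hnm
        linarith
      have hbdd : BddAbove (Set.range u) := by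
        refine ⟨K' - a', ?_⟩
        rintro _ ⟨n, rfl⟩
        rw [hu]
        exact neg_le.mpr (by rw [neg_sub]; exact key n)
      obtain ⟨s, hs⟩ := hσ u humono hbdd
      have hs0 : (0 : E) ≤ s := by
        have hub2 : ∀ n, u n ≤ (2 : ℝ) • s := by
          intro n
          have heq : u n = (2 : ℝ) • u (2 * n + 2) := by
            rw [hu]
            simp only []
            rw [smul_neg, smul_smul]
            congr 1
            congr 1
            push_cast
            field_simp
            ring
          rw [heq]
          exact smul_le_smul_of_nonneg_left (hs.1 ⟨2*n+2, rfl⟩) (by norm_num)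
        have hle : s ≤ (2:ℝ) • s := hs.2 (by rintro _ ⟨n, rfl⟩; exact hub2 n)
        have h2 : (2:ℝ) • s = s + s := by
          rw [two_smul]
        rw [h2] at hle
        exact (le_add_iff_nonneg_left s).mp hle
      have hsK : s ≤ K' - a' := hs.2 (by
        rintro _ ⟨n, rfl⟩
        rw [hu]
        exact neg_le.mpr (by rw [neg_sub]; exact key n))
      exact sub_nonneg.mp (le_trans hs0 hsK)

end Arch

section Core
set_option linter.unusedSectionVars false
variable {X : Type*} [MeasurableSpace X] {E : Type*} [AddCommGroup E] [PartialOrder E] [IsOrderedAddMonoid E]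
  [Module ℝ E] [PosSMulStrictMono ℝ E]
  {μ : Set X → WithTop E} (hμ : IsOMeasure μ)
include hμ

/-- Core comparison lemma: if a simple function is a.e. dominated by the
pointwise supremum of a monotone sequence of simple functions, then its
elementary order integral is dominated by every upper bound of their
elementary order integrals. -/
lemma core_le
    (hσ : ∀ a : ℕ → E, Monotone a → BddAbove (Set.range a) → ∃ s, IsLUB (Set.range a) s)
    {φ : SimpleFunc X NNReal} {ψ : ℕ → SimpleFunc X NNReal}
    (hψmono : ∀ x, Monotone fun n => ψ n x)
    {N : Set X} (hN : MeasurableSet N) (hN0 : μ N = 0)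
    (hle : ∀ x ∉ N, (φ x : ENNReal) ≤ ⨆ n, ((ψ n x : ENNReal)))
    {K : WithTop E} (hK : ∀ n, elemOInt μ (ψ n) ≤ K) :
    elemOInt μ φ ≤ K := by
  classical
  set φ' := φ.restrict Nᶜ with hφ'def
  have hφ' : elemOInt μ φ' = elemOInt μ φ := elemOInt_null hμ φ hN hN0
  have hφ'le : ∀ x, (φ' x : ENNReal) ≤ ⨆ n, ((ψ n x : ENNReal)) := by
    intro x
    rw [hφ'def, SimpleFunc.restrict_apply φ hN.compl]
    by_cases hx : x ∈ Nᶜ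
    · rw [Set.indicator_of_mem hx]; exact hle x hx
    · rw [Set.indicator_of_notMem hx]; simp
  rw [← hφ']
  refine arch_step hσ (elemOInt_nonneg hμ φ') fun c hc0 hc1 => ?_
  rw [← elemOInt_map_mul hμ c hc0 φ']
  set χ := φ'.map (fun x => c * x) with hχdef
  have hχ : ∀ x, χ x = c * φ' x := fun x => rfl
  set A : ℕ → Set X := fun n => {x | χ x ≤ ψ n x} with hAdef
  have hAmeas : ∀ n, MeasurableSet (A n) :=
    fun n => measurableSet_le χ.measurable (ψ n).measurable
  have hAmono : Monotone A := fun n m hnm x hx => le_trans hx (hψmono x hnm)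
  have hAU : (⋃ n, A n) = Set.univ := by
    rw [Set.eq_univ_iff_forall]
    intro x
    rw [Set.mem_iUnion]
    rcases eq_or_ne (φ' x) 0 with h0 | h0
    · refine ⟨0, ?_⟩
      show χ x ≤ ψ 0 x
      rw [hχ, h0, mul_zero]
      exact zero_le
    · have hlt : ((χ x : ENNReal)) < ⨆ n, ((ψ n x : ENNReal)) := by
        have h1 : (χ x : ENNReal) < (φ' x : ENNReal) := by
          rw [ENNReal.coe_lt_coe, hχ]
          exact mul_lt_of_lt_one_left (pos_iff_ne_zero.mpr h0) hc1
        exact lt_of_lt_of_le h1 (hφ'le x)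
      obtain ⟨n, hn⟩ := lt_iSup_iff.mp hlt
      exact ⟨n, ENNReal.coe_le_coe.mp hn.le⟩
  have hres : ∀ n, elemOInt μ (χ.restrict (A n)) ≤ K := by
    intro n
    refine le_trans (elemOInt_mono hμ ?_) (hK n)
    intro x
    rw [SimpleFunc.restrict_apply χ (hAmeas n)]
    by_cases hx : x ∈ A n
    · rw [Set.indicator_of_mem hx]; exact hx
    · rw [Set.indicator_of_notMem hx]; exact zero_le
  exact (elemOInt_restrict_isLUB hμ χ hAmeas hAmono hAU).2
    (by rintro _ ⟨n, rfl⟩; exact hres n)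

end Core

/-- Monotone convergence theorem for order integrals: if `f_n ↑ f` μ-almost
everywhere (pointwise in `[0,∞]`), then `∫ᵒ f_n dμ ↑ ∫ᵒ f dμ` in `E̅`. -/
theorem order_integral_monotone_convergence
    {X : Type*} [MeasurableSpace X]
    {E : Type*} [AddCommGroup E] [PartialOrder E] [IsOrderedAddMonoid E] [Module ℝ E]
    [PosSMulStrictMono ℝ E]
    (hσ : ∀ a : ℕ → E, Monotone a → BddAbove (Set.range a) → ∃ s, IsLUB (Set.range a) s)
    (μ : Set X → WithTop E) (hμ : IsOMeasure μ)
    (f : ℕ → X → ENNReal) (hf : ∀ n, Measurable (f n))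
    (g : X → ENNReal) (hg : Measurable g)
    (hae : ∃ N : Set X, MeasurableSet N ∧ μ N = 0 ∧
      ∀ x ∉ N, (Monotone fun n => f n x) ∧ (⨆ n, f n x) = g x)
    (I : ℕ → WithTop E) (hI : ∀ n, HasOInt μ (f n) (I n))
    (J : WithTop E) (hJ : HasOInt μ g J) :
    Monotone I ∧ IsLUB (Set.range I) J := by
  classical
  obtain ⟨N, hN, hN0, hNs⟩ := hae
  choose Φ hΦmono hΦsup hΦlub using hI
  obtain ⟨Ψ, hΨmono, hΨsup, hΨlub⟩ := hJ
  -- comparison of integrals via core_le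
  have hcomp : ∀ (n m : ℕ), n ≤ m → I n ≤ I m := by
    intro n m hnm
    refine (hΦlub n).2 ?_
    rintro _ ⟨k, rfl⟩
    refine core_le hμ hσ (fun x => hΦmono m x) hN hN0 (fun x hx => ?_)
      (fun j => (hΦlub m).1 ⟨j, rfl⟩)
    calc ((Φ n k x : ENNReal)) ≤ ⨆ j, ((Φ n j x : ENNReal)) :=
          le_iSup (fun j => ((Φ n j x : ENNReal))) k
      _ = f n x := hΦsup n x
      _ ≤ f m x := (hNs x hx).1 hnm
      _ = ⨆ j, ((Φ m j x : ENNReal)) := (hΦsup m x).symm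
  refine ⟨hcomp, ?_, ?_⟩
  · -- J is an upper bound of the I n
    rintro _ ⟨n, rfl⟩
    refine (hΦlub n).2 ?_
    rintro _ ⟨k, rfl⟩
    refine core_le hμ hσ (fun x => hΨmono x) hN hN0 (fun x hx => ?_)
      (fun j => hΨlub.1 ⟨j, rfl⟩)
    calc ((Φ n k x : ENNReal)) ≤ ⨆ j, ((Φ n j x : ENNReal)) :=
          le_iSup (fun j => ((Φ n j x : ENNReal))) k
      _ = f n x := hΦsup n x
      _ ≤ ⨆ j, f j x := le_iSup (fun j => f j x) n
      _ = g x := (hNs x hx).2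
      _ = ⨆ j, ((Ψ j x : ENNReal)) := (hΨsup x).symm
  · -- J is the least upper bound
    intro K hK
    refine hΨlub.2 ?_
    rintro _ ⟨m, rfl⟩
    -- the combined monotone sequence θ
    have hne : ∀ j : ℕ, (Finset.range (j+1)).Nonempty :=
      fun j => ⟨0, Finset.mem_range.mpr (Nat.succ_pos j)⟩
    set θ : ℕ → SimpleFunc X NNReal :=
      fun j => (Finset.range (j+1)).sup' (hne j) (fun n => Φ n j) with hθdef
    have hθeval : ∀ (j : ℕ) (x : X),
        θ j x = (Finset.range (j+1)).sup' (hne j) (fun n => Φ n j x) := by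
      intro j x
      rw [hθdef]
      exact Finset.comp_sup'_eq_sup'_comp (hne j) (fun ρ : SimpleFunc X NNReal => ρ x)
        (fun ρ σ => by show (ρ ⊔ σ) x = ρ x ⊔ σ x; rw [SimpleFunc.coe_sup]; rfl)
    have hθevalE : ∀ (j : ℕ) (x : X),
        ((θ j x : ENNReal)) = (Finset.range (j+1)).sup' (hne j)
          (fun n => ((Φ n j x : ENNReal))) := by
      intro j x
      rw [hθeval j x]
      exact Finset.comp_sup'_eq_sup'_comp (hne j) (fun r : NNReal => (r : ENNReal))
        (fun r s => by
          show ((r ⊔ s : NNReal) : ENNReal) = (r : ENNReal) ⊔ (s : ENNReal)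
          exact_mod_cast ENNReal.coe_mono.map_sup r s)
    have hθmono : ∀ x, Monotone fun j => θ j x := by
      intro x j j' hjj'
      simp only []
      rw [hθeval j x, hθeval j' x]
      refine Finset.sup'_le (hne j) _ fun n hn => ?_
      have hn' : n ∈ Finset.range (j'+1) :=
        Finset.mem_range.mpr (lt_of_lt_of_le (Finset.mem_range.mp hn) (by omega))
      exact le_trans (hΦmono n x hjj') (Finset.le_sup' (fun n => Φ n j' x) hn')
    have hθK : ∀ j, elemOInt μ (θ j) ≤ K := by
      intro j
      refine core_le hμ hσ (fun x => hΦmono j x) hN hN0 (fun x hx => ?_)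
        (fun k => le_trans ((hΦlub j).1 ⟨k, rfl⟩) (hK ⟨j, rfl⟩))
      rw [hθevalE j x]
      refine Finset.sup'_le (hne j) _ fun n hn => ?_
      calc ((Φ n j x : ENNReal)) ≤ ⨆ k, ((Φ n k x : ENNReal)) :=
            le_iSup (fun k => ((Φ n k x : ENNReal))) j
        _ = f n x := hΦsup n x
        _ ≤ f j x := (hNs x hx).1 (Nat.lt_succ_iff.mp (Finset.mem_range.mp hn))
        _ = ⨆ k, ((Φ j k x : ENNReal)) := (hΦsup j x).symm
    refine core_le hμ hσ hθmono hN hN0 (fun x hx => ?_) hθK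
    calc ((Ψ m x : ENNReal)) ≤ ⨆ m', ((Ψ m' x : ENNReal)) :=
          le_iSup (fun m' => ((Ψ m' x : ENNReal))) m
      _ = g x := hΨsup x
      _ = ⨆ n, f n x := ((hNs x hx).2).symm
      _ ≤ ⨆ j, ((θ j x : ENNReal)) := by
          refine iSup_le fun n => ?_
          rw [← hΦsup n x]
          refine iSup_le fun k => ?_
          have h1 : ((Φ n k x : ENNReal)) ≤ ((Φ n (max n k) x : ENNReal)) :=
            ENNReal.coe_le_coe.mpr (hΦmono n x (le_max_right n k))
          have h2 : ((Φ n (max n k) x : ENNReal)) ≤ ((θ (max n k) x : ENNReal)) := by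
            rw [hθevalE (max n k) x]
            exact Finset.le_sup' (f := fun n' => ((Φ n' (max n k) x : ENNReal)))
              (Finset.mem_range.mpr (by omega : n < max n k + 1))
          exact le_trans h1 (le_trans h2 (le_iSup (fun j => ((θ j x : ENNReal))) (max n k)))
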